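/- Let A ∈ ℝ^{N×T} have singular value decomposition A = S Σ Rᵀ and for λ ≥ 0 define shrink_λ(A) = S Σ̃ Rᵀ where Σ̃ replaces each singular value σᵢ by max(σᵢ − λ, 0). Then shrink_λ(A) is the unique minimizer over L ∈ ℝ^{N×T} of (1/2)‖A − L‖_F² + λ‖L‖_*. -/

import Mathlib

open Matrix BigOperators

noncomputable def singVals {N T : ℕ} (A : Matrix (Fin N) (Fin T) ℝ) : Fin T → ℝ :=
  fun i => Real.sqrt ((show (Aᵀ * A).IsHermitian from Matrix.isHermitian_conjTranspose_mul_self A).eigenvalues i)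

noncomputable def nuclearNorm {N T : ℕ} (A : Matrix (Fin N) (Fin T) ℝ) : ℝ :=
  ∑ i, singVals A i

noncomputable def opNorm {N T : ℕ} (A : Matrix (Fin N) (Fin T) ℝ) : ℝ :=
  ⨆ i, singVals A i

noncomputable def frobNorm {N T : ℕ} (A : Matrix (Fin N) (Fin T) ℝ) : ℝ :=
  Real.sqrt (∑ i, ∑ t, (A i t)^2)

noncomputable def maxNorm {N T : ℕ} (A : Matrix (Fin N) (Fin T) ℝ) : ℝ :=
  ⨆ i, ⨆ t, |A i t|

def mip {N T : ℕ} (A B : Matrix (Fin N) (Fin T) ℝ) : ℝ := (Aᵀ * B).trace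

section ShrinkAux
open Polynomial

/-- charpoly is invariant under orthogonal conjugation -/
lemma charpoly_conj_orth {n : ℕ} (P B : Matrix (Fin n) (Fin n) ℝ) (hP : P * Pᵀ = 1) :
    (P * B * Pᵀ).charpoly = B.charpoly := by
  have key : charmatrix (P * B * Pᵀ) =
      (C : ℝ →+* ℝ[X]).mapMatrix P * charmatrix B * (C : ℝ →+* ℝ[X]).mapMatrix Pᵀ := by
    unfold charmatrix
    rw [Matrix.mul_sub, Matrix.sub_mul, ← _root_.map_mul, ← _root_.map_mul]
    congr 1
    · -- scalar part
      have h1 : (Matrix.scalar (Fin n) (X : ℝ[X])) = (X : ℝ[X]) • (1 : Matrix (Fin n) (Fin n) ℝ[X]) := by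
        simp [Matrix.scalar, Matrix.smul_one_eq_diagonal]
      rw [h1, Matrix.mul_smul, Matrix.smul_mul, Matrix.mul_one, ← _root_.map_mul, hP, _root_.map_one]
  rw [Matrix.charpoly, Matrix.charpoly, key, det_mul, det_mul]
  have hdet : ((C : ℝ →+* ℝ[X]).mapMatrix P).det * ((C : ℝ →+* ℝ[X]).mapMatrix Pᵀ).det = 1 := by
    rw [← det_mul, ← _root_.map_mul, hP, _root_.map_one, det_one]
  calc ((C : ℝ →+* ℝ[X]).mapMatrix P).det * (charmatrix B).det * ((C : ℝ →+* ℝ[X]).mapMatrix Pᵀ).det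
      = ((C : ℝ →+* ℝ[X]).mapMatrix P).det * ((C : ℝ →+* ℝ[X]).mapMatrix Pᵀ).det * (charmatrix B).det := by ring
    _ = (charmatrix B).det := by rw [hdet, one_mul]

lemma charpoly_diag {n : ℕ} (v : Fin n → ℝ) :
    (Matrix.diagonal v).charpoly = ∏ i, (X - C (v i)) := by
  have h : charmatrix (Matrix.diagonal v) = Matrix.diagonal (fun i => X - C (v i)) := by
    ext i j
    rcases eq_or_ne i j with h | h
    · subst h; simp
    · simp [charmatrix_apply_ne _ _ _ h, Matrix.diagonal_apply_ne _ h]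
  rw [Matrix.charpoly, h, det_diagonal]

lemma roots_charpoly_hermitian {n : ℕ} (B : Matrix (Fin n) (Fin n) ℝ) (hB : B.IsHermitian) :
    B.charpoly.roots = Finset.univ.val.map hB.eigenvalues := by
  have h1 : B.charpoly = (Matrix.diagonal hB.eigenvalues).charpoly := by
    conv_lhs => rw [hB.spectral_theorem]
    have hofr : (RCLike.ofReal ∘ hB.eigenvalues : Fin n → ℝ) = hB.eigenvalues := rfl
    rw [hofr]
    have hstar : (star (hB.eigenvectorUnitary : Matrix (Fin n) (Fin n) ℝ))
        = (hB.eigenvectorUnitary : Matrix (Fin n) (Fin n) ℝ)ᵀ := by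
      rw [Matrix.star_eq_conjTranspose, Matrix.conjTranspose_eq_transpose_of_trivial]
    rw [Unitary.conjStarAlgAut_apply, hstar]
    exact charpoly_conj_orth _ _ (by
      have := Unitary.coe_mul_star_self hB.eigenvectorUnitary
      rw [Unitary.coe_star, Matrix.star_eq_conjTranspose,
        Matrix.conjTranspose_eq_transpose_of_trivial] at this
      exact this)
  rw [h1, charpoly_diag]
  have : (∏ i, (X - C (hB.eigenvalues i)))
      = ((Finset.univ.val.map hB.eigenvalues).map (fun a => X - C a)).prod := by
    rw [Multiset.map_map]
    rfl
  rw [this, roots_multiset_prod_X_sub_C]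

lemma sum_f_eigs {n : ℕ} (B : Matrix (Fin n) (Fin n) ℝ) (hB : B.IsHermitian) (f : ℝ → ℝ) :
    ∑ i, f (hB.eigenvalues i) = (B.charpoly.roots.map f).sum := by
  rw [roots_charpoly_hermitian B hB, Multiset.map_map]
  rfl

lemma nuclearNorm_eq_roots {N T : ℕ} (A : Matrix (Fin N) (Fin T) ℝ) :
    nuclearNorm A = ((Aᴴ * A).charpoly.roots.map Real.sqrt).sum := by
  rw [← sum_f_eigs _ (Matrix.isHermitian_conjTranspose_mul_self A) Real.sqrt]
  rfl

lemma nuclearNorm_conj {N T : ℕ} (S : Matrix (Fin N) (Fin N) ℝ) (R : Matrix (Fin T) (Fin T) ℝ)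
    (hS : Sᵀ * S = 1) (hR2 : R * Rᵀ = 1) (M : Matrix (Fin N) (Fin T) ℝ) :
    nuclearNorm (S * M * Rᵀ) = nuclearNorm M := by
  rw [nuclearNorm_eq_roots, nuclearNorm_eq_roots]
  apply congrArg; apply congrArg
  have h1 : (S * M * Rᵀ)ᴴ * (S * M * Rᵀ) = R * (Mᴴ * M) * Rᵀ := by
    rw [Matrix.conjTranspose_eq_transpose_of_trivial, Matrix.conjTranspose_eq_transpose_of_trivial]
    rw [Matrix.transpose_mul, Matrix.transpose_mul, Matrix.transpose_transpose]
    calc Rᵀᵀ * (Mᵀ * Sᵀ) * (S * M * Rᵀ) = R * (Mᵀ * (Sᵀ * S) * M) * Rᵀ := by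
          rw [Matrix.transpose_transpose]; simp only [Matrix.mul_assoc]
      _ = R * (Mᵀ * M) * Rᵀ := by rw [hS, Matrix.mul_one]
  rw [h1, charpoly_conj_orth R _ hR2]

lemma sum_ite_eq_dite {N' : ℕ} (c : ℕ) (g : Fin N' → ℝ) :
    ∑ i : Fin N', (if (i : ℕ) = c then g i else 0) = if h : c < N' then g ⟨c, h⟩ else 0 := by
  split
  · next h =>
    rw [Finset.sum_eq_single ⟨c, h⟩]
    · simp
    · intro i _ hi
      have : (i : ℕ) ≠ c := fun hc => hi (Fin.ext hc)
      simp [this]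
    · simp
  · next h =>
    apply Finset.sum_eq_zero
    intro i _
    have : (i : ℕ) ≠ c := by omega
    simp [this]

lemma sum_dite_lt_le {N T : ℕ} (g : Fin N → ℝ) (hg : ∀ i, 0 ≤ g i) :
    ∑ t : Fin T, (if h : (t : ℕ) < N then g ⟨t, h⟩ else 0) ≤ ∑ i, g i := by
  set G : ℕ → ℝ := fun j => if h : j < N then g ⟨j, h⟩ else 0 with hG
  have hGnn : ∀ j, 0 ≤ G j := by
    intro j; rw [hG]; dsimp only; split
    · apply hg
    · exact le_rfl
  have h0 : (∑ t : Fin T, if h : (t : ℕ) < N then g ⟨t, h⟩ else 0) = ∑ t : Fin T, G (t : ℕ) := rfl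
  rw [h0]
  calc ∑ t : Fin T, G (t : ℕ) = ∑ j ∈ Finset.range T, G j := Fin.sum_univ_eq_sum_range G T
    _ = ∑ j ∈ Finset.range (min N T), G j := by
        refine (Finset.sum_subset ?_ ?_).symm
        · exact Finset.range_subset_range.mpr (Nat.min_le_right N T)
        · intro j hj hj2
          simp only [Finset.mem_range] at hj hj2
          have : ¬ j < N := by omega
          simp [hG, this]
    _ ≤ ∑ j ∈ Finset.range N, G j := by
        apply Finset.sum_le_sum_of_subset_of_nonneg
        · exact Finset.range_subset_range.mpr (Nat.min_le_left N T)
        · intro j _ _; exact hGnn j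
    _ = ∑ i : Fin N, G i := (Fin.sum_univ_eq_sum_range G N).symm
    _ = ∑ i, g i := by
        apply Finset.sum_congr rfl
        intro i _
        simp [hG, i.isLt]

lemma nuclearNorm_diag {N T : ℕ} (f : ℕ → ℝ) (hf : ∀ k, 0 ≤ f k) :
    nuclearNorm (Matrix.of fun (i : Fin N) (t : Fin T) => if (i : ℕ) = (t : ℕ) then f i else 0)
      = ∑ t : Fin T, (if (t : ℕ) < N then f t else 0) := by
  set D : Matrix (Fin N) (Fin T) ℝ :=
    Matrix.of fun (i : Fin N) (t : Fin T) => if (i : ℕ) = (t : ℕ) then f i else 0 with hD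
  have hDD : Dᴴ * D = Matrix.diagonal (fun t : Fin T => if (t : ℕ) < N then (f t)^2 else 0) := by
    rw [Matrix.conjTranspose_eq_transpose_of_trivial]
    ext t t'
    rw [Matrix.mul_apply]
    rcases eq_or_ne t t' with h | h
    · subst h
      rw [Matrix.diagonal_apply_eq]
      have : ∀ i : Fin N, Dᵀ t i * D i t = (if (i : ℕ) = (t : ℕ) then (f i)^2 else 0) := by
        intro i
        simp only [Matrix.transpose_apply, hD, Matrix.of_apply]
        split <;> simp_all [sq]
      rw [Finset.sum_congr rfl (fun i _ => this i), sum_ite_eq_dite (t : ℕ) (fun i : Fin N => (f i)^2)]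
      split <;> rfl
    · rw [Matrix.diagonal_apply_ne _ h]
      apply Finset.sum_eq_zero
      intro i _
      have : (t : ℕ) ≠ (t' : ℕ) := fun hc => h (Fin.ext hc)
      simp only [Matrix.transpose_apply, hD, Matrix.of_apply]
      split <;> split <;> simp_all
  rw [nuclearNorm_eq_roots, hDD, charpoly_diag]
  have hroots : (∏ t : Fin T, (Polynomial.X - Polynomial.C ((fun t : Fin T => if (t : ℕ) < N then (f t)^2 else 0) t))).roots
      = Finset.univ.val.map (fun t : Fin T => if (t : ℕ) < N then (f t)^2 else 0) := by
    have : (∏ t : Fin T, (Polynomial.X - Polynomial.C ((fun t : Fin T => if (t : ℕ) < N then (f t)^2 else 0) t)))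
        = ((Finset.univ.val.map (fun t : Fin T => if (t : ℕ) < N then (f t)^2 else 0)).map (fun a => Polynomial.X - Polynomial.C a)).prod := by
      rw [Multiset.map_map]; rfl
    rw [this, Polynomial.roots_multiset_prod_X_sub_C]
  rw [hroots, Multiset.map_map]
  have : ∀ t : Fin T, (Real.sqrt ∘ fun t : Fin T => if (t : ℕ) < N then (f t)^2 else 0) t
      = (if (t : ℕ) < N then f t else 0) := by
    intro t
    simp only [Function.comp_apply]
    split
    · exact Real.sqrt_sq (hf t)
    · exact Real.sqrt_zero
  calc (Finset.univ.val.map (Real.sqrt ∘ fun t : Fin T => if (t : ℕ) < N then (f t)^2 else 0)).sum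
      = ∑ t : Fin T, (Real.sqrt ∘ fun t : Fin T => if (t : ℕ) < N then (f t)^2 else 0) t := rfl
    _ = ∑ t : Fin T, (if (t : ℕ) < N then f t else 0) := Finset.sum_congr rfl (fun t _ => this t)

lemma cs_sqrt {T : ℕ} (a b : Fin T → ℝ) (ha : ∀ t, 0 ≤ a t) :
    ∑ t, a t * b t ≤ Real.sqrt (∑ t, (a t)^2) * Real.sqrt (∑ t, (b t)^2) := by
  have h := Finset.sum_mul_sq_le_sq_mul_sq Finset.univ a b
  have h1 : ∑ t, a t * b t ≤ |∑ t, a t * b t| := le_abs_self _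
  have h2 : |∑ t, a t * b t| = Real.sqrt ((∑ t, a t * b t)^2) := (Real.sqrt_sq_eq_abs _).symm
  rw [h2] at h1
  refine h1.trans ?_
  rw [← Real.sqrt_mul (Finset.sum_nonneg fun t _ => sq_nonneg (a t))]
  exact Real.sqrt_le_sqrt h

lemma diag_bound_aux {N T : ℕ} (M CM : Matrix (Fin N) (Fin T) ℝ) (U : Matrix (Fin T) (Fin T) ℝ)
    (ev : Fin T → ℝ)
    (hcol : ∀ k, ∑ i : Fin N, (CM i k)^2 = ev k)
    (hrow : ∀ k, ∑ t : Fin T, (U t k)^2 = 1)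
    (hMC : ∀ (i : Fin N) (t : Fin T), M i t = ∑ k, CM i k * U t k) :
    (∑ t : Fin T, if h : (t : ℕ) < N then |M ⟨t, h⟩ t| else 0) ≤ ∑ k, Real.sqrt (ev k) := by
  have step1 : (∑ t : Fin T, if h : (t : ℕ) < N then |M ⟨t, h⟩ t| else 0)
      ≤ ∑ k : Fin T, ∑ t : Fin T,
          (if h : (t : ℕ) < N then |CM ⟨t, h⟩ k| else 0) * |U t k| := by
    rw [Finset.sum_comm]
    apply Finset.sum_le_sum
    intro t _
    split
    · next h =>
      rw [hMC ⟨t, h⟩ t]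
      refine (Finset.abs_sum_le_sum_abs _ _).trans ?_
      apply Finset.sum_le_sum
      intro k _
      rw [abs_mul]
    · exact Finset.sum_nonneg fun k _ => mul_nonneg (by positivity) (abs_nonneg _)
  refine step1.trans (Finset.sum_le_sum fun k _ => ?_)
  refine (cs_sqrt _ _ (fun t => by by_cases h : (t : ℕ) < N <;> simp [h, abs_nonneg])).trans ?_
  have ha : (∑ t : Fin T, ((if h : (t : ℕ) < N then |CM ⟨t, h⟩ k| else 0))^2)
      ≤ ev k := by
    rw [← hcol k]
    have heq : ∀ t : Fin T, ((if h : (t : ℕ) < N then |CM ⟨t, h⟩ k| else 0))^2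
        = (if h : (t : ℕ) < N then (fun i : Fin N => (CM i k)^2) ⟨t, h⟩ else 0) := by
      intro t; split <;> simp [sq_abs]
    rw [Finset.sum_congr rfl fun t _ => heq t]
    exact sum_dite_lt_le (fun i : Fin N => (CM i k)^2) (fun i => sq_nonneg _)
  have hb : (∑ t : Fin T, (|U t k|)^2) = 1 := by
    rw [Finset.sum_congr rfl fun t _ => sq_abs (U t k)]
    exact hrow k
  rw [hb, Real.sqrt_one, mul_one]
  exact Real.sqrt_le_sqrt ha

lemma sum_abs_diag_le_nuclearNorm {N T : ℕ} (M : Matrix (Fin N) (Fin T) ℝ) :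
    (∑ t : Fin T, if h : (t : ℕ) < N then |M ⟨t, h⟩ t| else 0) ≤ nuclearNorm M := by
  set hB := Matrix.isHermitian_conjTranspose_mul_self M
  set U : Matrix (Fin T) (Fin T) ℝ := (hB.eigenvectorUnitary : Matrix (Fin T) (Fin T) ℝ) with hU
  have hstar : star U = Uᵀ := by
    rw [Matrix.star_eq_conjTranspose, Matrix.conjTranspose_eq_transpose_of_trivial]
  have hU1 : Uᵀ * U = 1 := by
    have := Unitary.coe_star_mul_self hB.eigenvectorUnitary
    rw [← hU, hstar] at this
    exact this
  have hU2 : U * Uᵀ = 1 := mul_eq_one_comm.mp hU1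
  have hdiag : Uᵀ * (Mᴴ * M) * U = Matrix.diagonal hB.eigenvalues := by
    have := hB.conjStarAlgAut_star_eigenvectorUnitary
    rw [Unitary.conjStarAlgAut_apply, Unitary.coe_star, star_star, ← hU, hstar] at this
    exact this
  set CM : Matrix (Fin N) (Fin T) ℝ := M * U with hCM
  have hCC : CMᵀ * CM = Matrix.diagonal hB.eigenvalues := by
    rw [hCM, Matrix.transpose_mul, ← hdiag, Matrix.conjTranspose_eq_transpose_of_trivial]
    simp only [Matrix.mul_assoc]
  have hcol : ∀ k : Fin T, ∑ i : Fin N, (CM i k)^2 = hB.eigenvalues k := by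
    intro k
    have h := congrFun (congrFun hCC k) k
    rw [Matrix.diagonal_apply_eq, Matrix.mul_apply] at h
    rw [← h]
    exact Finset.sum_congr rfl fun i _ => by simp [sq, Matrix.transpose_apply]
  have hrow : ∀ k : Fin T, ∑ t : Fin T, (U t k)^2 = 1 := by
    intro k
    have h := congrFun (congrFun hU1 k) k
    rw [Matrix.mul_apply] at h
    simp only [Matrix.one_apply_eq] at h
    rw [← h]
    exact Finset.sum_congr rfl fun t _ => by simp [sq, Matrix.transpose_apply]
  have hMC : ∀ (i : Fin N) (t : Fin T), M i t = ∑ k, CM i k * U t k := by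
    intro i t
    have h : M = CM * Uᵀ := by rw [hCM, Matrix.mul_assoc, hU2, Matrix.mul_one]
    rw [h, Matrix.mul_apply]
    exact Finset.sum_congr rfl fun k _ => by simp [Matrix.transpose_apply]
  exact diag_bound_aux M CM U hB.eigenvalues hcol hrow hMC

lemma soft_le {s lam x : ℝ} (hs : 0 ≤ s) (hlam : 0 ≤ lam) :
    (1/2)*(s - max (s - lam) 0)^2 + lam * max (s - lam) 0 ≤ (1/2)*(s - x)^2 + lam * |x| := by
  rcases le_total lam s with h | h
  · rw [max_eq_left (by linarith)]
    nlinarith [le_abs_self x, sq_nonneg (x - (s - lam)), abs_nonneg x]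
  · rw [max_eq_right (by linarith)]
    nlinarith [le_abs_self x, neg_abs_le x, abs_nonneg x, sq_abs x]

lemma soft_lt {s lam x : ℝ} (hs : 0 ≤ s) (hlam : 0 ≤ lam) (hx : x ≠ max (s - lam) 0) :
    (1/2)*(s - max (s - lam) 0)^2 + lam * max (s - lam) 0 < (1/2)*(s - x)^2 + lam * |x| := by
  rcases le_total lam s with h | h
  · rw [max_eq_left (by linarith)]
    rw [max_eq_left (by linarith)] at hx
    have h1 : (x - (s - lam))^2 > 0 := by
      have := sub_ne_zero.mpr hx
      positivity
    nlinarith [le_abs_self x, abs_nonneg x]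
  · rw [max_eq_right (by linarith)]
    rw [max_eq_right (by linarith)] at hx
    have h1 : 0 < |x| := abs_pos.mpr hx
    nlinarith [le_abs_self x, neg_abs_le x, sq_abs x]

lemma frobSq_eq {N T : ℕ} (X : Matrix (Fin N) (Fin T) ℝ) :
    (frobNorm X)^2 = ∑ i, ∑ t, (X i t)^2 := by
  unfold frobNorm
  rw [Real.sq_sqrt]
  exact Finset.sum_nonneg fun i _ => Finset.sum_nonneg fun t _ => sq_nonneg _

lemma frobSq_trace {N T : ℕ} (X : Matrix (Fin N) (Fin T) ℝ) :
    ∑ i, ∑ t, (X i t)^2 = (Xᵀ * X).trace := by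
  rw [Matrix.trace]
  rw [Finset.sum_comm]
  apply Finset.sum_congr rfl
  intro t _
  rw [Matrix.diag_apply, Matrix.mul_apply]
  exact Finset.sum_congr rfl fun i _ => by simp [sq, Matrix.transpose_apply]

lemma frobSq_conj {N T : ℕ} (S : Matrix (Fin N) (Fin N) ℝ) (R : Matrix (Fin T) (Fin T) ℝ)
    (hS : Sᵀ * S = 1) (hR : Rᵀ * R = 1) (M : Matrix (Fin N) (Fin T) ℝ) :
    ∑ i, ∑ t, ((S * M * Rᵀ) i t)^2 = ∑ i, ∑ t, (M i t)^2 := by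
  rw [frobSq_trace, frobSq_trace]
  have h1 : (S * M * Rᵀ)ᵀ * (S * M * Rᵀ) = R * (Mᵀ * M) * Rᵀ := by
    rw [Matrix.transpose_mul, Matrix.transpose_mul, Matrix.transpose_transpose]
    calc R * (Mᵀ * Sᵀ) * (S * M * Rᵀ) = R * (Mᵀ * ((Sᵀ * S) * (M * Rᵀ))) := by
          simp only [Matrix.mul_assoc]
      _ = R * (Mᵀ * M) * Rᵀ := by rw [hS, Matrix.one_mul]; simp only [Matrix.mul_assoc]
  rw [h1, Matrix.trace_mul_cycle, ← Matrix.mul_assoc, hR, Matrix.one_mul]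

end ShrinkAux

theorem shrink_is_unique_minimizer {N T : ℕ}
    (A : Matrix (Fin N) (Fin T) ℝ) (lam : ℝ) (hlam : 0 ≤ lam)
    (S : Matrix (Fin N) (Fin N) ℝ) (R : Matrix (Fin T) (Fin T) ℝ)
    (hS : Sᵀ * S = 1) (hR : Rᵀ * R = 1)
    (σ : ℕ → ℝ) (hσ : ∀ i, 0 ≤ σ i)
    (hA : A = S * (Matrix.of fun (i : Fin N) (t : Fin T) => if (i : ℕ) = (t : ℕ) then σ i else 0) * Rᵀ) :
    ∀ L : Matrix (Fin N) (Fin T) ℝ,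
      L ≠ S * (Matrix.of fun (i : Fin N) (t : Fin T) => if (i : ℕ) = (t : ℕ) then max (σ i - lam) 0 else 0) * Rᵀ →
      (1/2) * (frobNorm (A - S * (Matrix.of fun (i : Fin N) (t : Fin T) => if (i : ℕ) = (t : ℕ) then max (σ i - lam) 0 else 0) * Rᵀ))^2
        + lam * nuclearNorm (S * (Matrix.of fun (i : Fin N) (t : Fin T) => if (i : ℕ) = (t : ℕ) then max (σ i - lam) 0 else 0) * Rᵀ)
      < (1/2) * (frobNorm (A - L))^2 + lam * nuclearNorm L := by
  intro L hL
  have hS2 : S * Sᵀ = 1 := mul_eq_one_comm.mp hS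
  have hR2 : R * Rᵀ = 1 := mul_eq_one_comm.mp hR
  set D : Matrix (Fin N) (Fin T) ℝ :=
    Matrix.of fun (i : Fin N) (t : Fin T) => if (i : ℕ) = (t : ℕ) then σ i else 0 with hDdef
  set Dl : Matrix (Fin N) (Fin T) ℝ :=
    Matrix.of fun (i : Fin N) (t : Fin T) => if (i : ℕ) = (t : ℕ) then max (σ i - lam) 0 else 0 with hDldef
  set M : Matrix (Fin N) (Fin T) ℝ := Sᵀ * L * R with hMdef
  have hLM : L = S * M * Rᵀ := by
    rw [hMdef]
    calc L = (S * Sᵀ) * L * (R * Rᵀ) := by rw [hS2, hR2, Matrix.one_mul, Matrix.mul_one]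
      _ = S * (Sᵀ * L * R) * Rᵀ := by simp only [Matrix.mul_assoc]
  have hMD : M ≠ Dl := by
    intro h
    apply hL
    rw [hLM, h]
  -- frobenius terms
  have hfrob1 : (frobNorm (A - L))^2 = ∑ i, ∑ t, ((D - M) i t)^2 := by
    have : A - L = S * (D - M) * Rᵀ := by
      rw [hA, hLM, Matrix.mul_sub, Matrix.sub_mul]
    rw [this, frobSq_eq, frobSq_conj S R hS hR]
  have hfrob2 : (frobNorm (A - S * Dl * Rᵀ))^2 = ∑ i, ∑ t, ((D - Dl) i t)^2 := by
    have : A - S * Dl * Rᵀ = S * (D - Dl) * Rᵀ := by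
      rw [hA, Matrix.mul_sub, Matrix.sub_mul]
    rw [this, frobSq_eq, frobSq_conj S R hS hR]
  -- nuclear terms
  have hnuc1 : nuclearNorm L = nuclearNorm M := by rw [hLM]; exact nuclearNorm_conj S R hS hR2 M
  have hnuc2 : nuclearNorm (S * Dl * Rᵀ) = ∑ t : Fin T, (if (t : ℕ) < N then max (σ t - lam) 0 else 0) := by
    rw [nuclearNorm_conj S R hS hR2 Dl, hDldef]
    exact nuclearNorm_diag (fun k => max (σ k - lam) 0) (fun k => le_max_right _ _)
  -- nuclear lower bound for M
  have hnuc3 : (∑ t : Fin T, if h : (t : ℕ) < N then |M ⟨t, h⟩ t| else 0) ≤ nuclearNorm M :=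
    sum_abs_diag_le_nuclearNorm M
  -- per-entry functions
  set F : Fin N × Fin T → ℝ := fun p =>
    (1/2)*((D - M) p.1 p.2)^2 + lam * (if (p.1 : ℕ) = (p.2 : ℕ) then |M p.1 p.2| else 0) with hF
  set G : Fin N × Fin T → ℝ := fun p =>
    (1/2)*((D - Dl) p.1 p.2)^2 + lam * (if (p.1 : ℕ) = (p.2 : ℕ) then max (σ p.1 - lam) 0 else 0) with hG
  have hGF : ∀ p : Fin N × Fin T, G p ≤ F p := by
    rintro ⟨i, t⟩
    rw [hF, hG]
    dsimp only
    rcases eq_or_ne (i : ℕ) (t : ℕ) with h | h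
    · simp only [h, if_true, Matrix.sub_apply, hDdef, hDldef, Matrix.of_apply, if_pos rfl]
      exact soft_le (hσ t) hlam
    · simp only [h, if_false, Matrix.sub_apply, hDdef, hDldef, Matrix.of_apply, if_neg h]
      simp only [sub_zero, zero_sub, mul_zero, add_zero]
      nlinarith [sq_nonneg (M i t)]
  have hGFs : ∀ p : Fin N × Fin T, M p.1 p.2 ≠ Dl p.1 p.2 → G p < F p := by
    rintro ⟨i, t⟩ hp
    rw [hF, hG]
    dsimp only
    dsimp only at hp
    rcases eq_or_ne (i : ℕ) (t : ℕ) with h | h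
    · simp only [hDldef, Matrix.of_apply, if_pos h, h] at hp
      simp only [h, if_true, Matrix.sub_apply, hDdef, hDldef, Matrix.of_apply, if_pos rfl]
      exact soft_lt (hσ t) hlam hp
    · simp only [hDldef, Matrix.of_apply, if_neg h] at hp
      simp only [h, if_false, Matrix.sub_apply, hDdef, hDldef, Matrix.of_apply, if_neg h]
      simp only [sub_zero, zero_sub, mul_zero, add_zero]
      have : 0 < (M i t)^2 := by positivity
      nlinarith
  -- existence of strict index
  have hex : ∃ p : Fin N × Fin T, M p.1 p.2 ≠ Dl p.1 p.2 := by
    by_contra hc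
    push_neg at hc
    apply hMD
    ext i t
    exact hc ⟨i, t⟩
  have hsum : ∑ p : Fin N × Fin T, G p < ∑ p : Fin N × Fin T, F p := by
    obtain ⟨p0, hp0⟩ := hex
    exact Finset.sum_lt_sum (fun p _ => hGF p) ⟨p0, Finset.mem_univ p0, hGFs p0 hp0⟩
  -- identify sums
  have split : ∀ (X : Matrix (Fin N) (Fin T) ℝ) (Y : Fin N → Fin T → ℝ),
      (∑ p : Fin N × Fin T, ((1/2)*(X p.1 p.2)^2 + lam * Y p.1 p.2))
        = (1/2) * (∑ i, ∑ t, (X i t)^2) + lam * (∑ t : Fin T, ∑ i : Fin N, Y i t) := by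
    intro X Y
    rw [Fintype.sum_prod_type]
    simp only [Finset.sum_add_distrib, ← Finset.mul_sum]
    congr 1
    rw [Finset.sum_comm]
  have hsumG : ∑ p : Fin N × Fin T, G p
      = (1/2) * (∑ i, ∑ t, ((D - Dl) i t)^2)
        + lam * ∑ t : Fin T, (if (t : ℕ) < N then max (σ (t : ℕ) - lam) 0 else 0) := by
    simp only [hG]
    rw [split (D - Dl) (fun i t => if (i : ℕ) = (t : ℕ) then max (σ (i : ℕ) - lam) 0 else 0)]
    congr 1
    apply congrArg
    apply Finset.sum_congr rfl
    intro t _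
    rw [sum_ite_eq_dite (t : ℕ) (fun i : Fin N => max (σ (i : ℕ) - lam) 0)]
    split <;> rfl
  have hsumF : ∑ p : Fin N × Fin T, F p
      = (1/2) * (∑ i, ∑ t, ((D - M) i t)^2)
        + lam * ∑ t : Fin T, (if h : (t : ℕ) < N then |M ⟨t, h⟩ t| else 0) := by
    simp only [hF]
    rw [split (D - M) (fun i t => if (i : ℕ) = (t : ℕ) then |M i t| else 0)]
    congr 1
    apply congrArg
    apply Finset.sum_congr rfl
    intro t _
    exact sum_ite_eq_dite (t : ℕ) (fun i : Fin N => |M i t|)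
  -- assemble
  rw [hfrob2, hnuc2, hfrob1, hnuc1]
  calc (1/2) * (∑ i, ∑ t, ((D - Dl) i t)^2)
        + lam * ∑ t : Fin T, (if (t : ℕ) < N then max (σ (t : ℕ) - lam) 0 else 0)
      = ∑ p : Fin N × Fin T, G p := hsumG.symm
    _ < ∑ p : Fin N × Fin T, F p := hsum
    _ ≤ (1/2) * (∑ i, ∑ t, ((D - M) i t)^2) + lam * nuclearNorm M := by
        rw [hsumF]
        have h := mul_le_mul_of_nonneg_left hnuc3 hlam
        linarith
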